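/- Stochastic primal-dual setup: let (Ω, ℱ, ℙ) be a probability space, Θ a measurable space, δ ∈ (0, 1/2), and V, g : Θ → ℝ measurable with |g(θ)| ≤ 1 − δ for all θ; assume the dual function d(λ) := sup_{θ∈Θ} (V(θ) + λ·g(θ)) is finite for every λ ≥ 0, and that λ⋆ ≥ 0 satisfies d(λ⋆) = inf_{λ ≥ 0} d(λ). Fix η > 0, ε ≥ 0. Let (λ_k)_{k≥0}, (ĝ_k)_{k≥0} be real-valued random variables and (θ_k)_{k≥1} Θ-valued random variables such that for every k ≥ 0, almost surely: λ₀ ≥ 0; |ĝ_k| ≤ 1 − δ; λ_{k+1} = max(0, λ_k − η·ĝ_k); d(λ_k) ≤ V(θ_{k+1}) + λ_k·g(θ_{k+1}) + ε; λ_k is σ(θ_{k+1})-measurable and E[ĝ_k | σ(θ_{k+1})] = g(θ_{k+1}); λ₀ is square-integrable and each V(θ_{k+1}) is integrable. Suppose additionally there exist θ̃ ∈ Θ and C > 0 with g(θ̃) ≥ C (strict feasibility). Then limsup_{k→∞} E[λ_k]/k = 0. -/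

import Mathlib

open MeasureTheory Finset

/-- Lemma 6: under the Safe Primal-Dual
dynamics and a strictly feasible point, the expected dual iterates grow
sublinearly: `limsup E[λ_k]/k = 0`. -/
theorem stmt_16 {Ω Θ : Type*} [MeasurableSpace Ω] {mΘ : MeasurableSpace Θ}
    (μ : Measure Ω) [IsProbabilityMeasure μ]
    (δ : ℝ) (hδ0 : 0 < δ) (hδ : δ < 1 / 2)
    (V g : Θ → ℝ) (hV : Measurable V) (hg : Measurable g)
    (hgb : ∀ θ, |g θ| ≤ 1 - δ)
    (d : ℝ → ℝ) (hd : ∀ l : ℝ, 0 ≤ l → IsLUB (Set.range fun θ => V θ + l * g θ) (d l))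
    (lstar : ℝ) (hlstar : 0 ≤ lstar) (hmin : ∀ l : ℝ, 0 ≤ l → d lstar ≤ d l)
    (η : ℝ) (hη : 0 < η) (ε : ℝ) (hε : 0 ≤ ε)
    (lam ghat : ℕ → Ω → ℝ) (th : ℕ → Ω → Θ)
    (hthMeas : ∀ k : ℕ, Measurable (th (k + 1)))
    (hlam0 : ∀ᵐ ω ∂μ, 0 ≤ lam 0 ω)
    (hghatb : ∀ k : ℕ, ∀ᵐ ω ∂μ, |ghat k ω| ≤ 1 - δ)
    (hupdate : ∀ k : ℕ, ∀ᵐ ω ∂μ, lam (k + 1) ω = max 0 (lam k ω - η * ghat k ω))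
    (hprimal : ∀ k : ℕ, ∀ᵐ ω ∂μ,
      d (lam k ω) ≤ V (th (k + 1) ω) + lam k ω * g (th (k + 1) ω) + ε)
    (hadapted : ∀ k : ℕ, Measurable[MeasurableSpace.comap (th (k + 1)) mΘ] (lam k))
    (hunbiased : ∀ k : ℕ,
      μ[ghat k | MeasurableSpace.comap (th (k + 1)) mΘ] =ᵐ[μ] fun ω => g (th (k + 1) ω))
    (hlam0L2 : MemLp (lam 0) 2 μ)
    (hVint : ∀ k : ℕ, Integrable (fun ω => V (th (k + 1) ω)) μ)
    -- strict feasibility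
    (θtilde : Θ) (C : ℝ) (hC : 0 < C) (hstrict : C ≤ g θtilde) :
    Filter.limsup (fun k : ℕ => (∫ ω, lam k ω ∂μ) / (k : ℝ)) Filter.atTop = 0 := by
  have hδ1 : (0:ℝ) < 1 - δ := by linarith
  -- the constant B
  set B : ℝ := ε + d 0 - V θtilde with hBdef
  have hVle : ∀ θ : Θ, V θ ≤ d 0 := by
    intro θ
    have := (hd 0 le_rfl).1 ⟨θ, rfl⟩
    simpa using this
  have hB0 : 0 ≤ B := by
    have := hVle θtilde; simp only [hBdef]; linarith
  set K : ℝ := 2 * η * B + η ^ 2 * (1 - δ) ^ 2 with hKdef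
  set K' : ℝ := max K ((B / C + η * (1 - δ)) ^ 2) with hK'def
  have hK0 : 0 ≤ K := by positivity
  have hK'0 : 0 ≤ K' := le_trans hK0 (le_max_left _ _)
  have hG : ∀ k : ℕ, MeasurableSpace.comap (th (k + 1)) mΘ ≤ ‹MeasurableSpace Ω› :=
    fun k => (hthMeas k).comap_le
  have hlamMeas : ∀ k : ℕ, Measurable (lam k) :=
    fun k => (hadapted k).mono (hG k) le_rfl
  -- nonnegativity of the iterates
  have hlamnn : ∀ k : ℕ, ∀ᵐ ω ∂μ, 0 ≤ lam k ω := by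
    intro k
    induction k with
    | zero => exact hlam0
    | succ n ih =>
      filter_upwards [hupdate n] with ω h
      rw [h]; exact le_max_left _ _
  -- L² membership of the iterates
  have hlamL2 : ∀ k : ℕ, MemLp (lam k) 2 μ := by
    intro k
    induction k with
    | zero => exact hlam0L2
    | succ n ih =>
      have hbd : MemLp (fun ω => |lam n ω| + η * (1 - δ)) 2 μ :=
        (ih.norm).add (memLp_const _)
      refine hbd.mono ((hlamMeas (n + 1)).aestronglyMeasurable) ?_
      filter_upwards [hupdate n, hghatb n] with ω hu hb
      have h1 : |max 0 (lam n ω - η * ghat n ω)| ≤ |lam n ω - η * ghat n ω| := by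
        rw [abs_of_nonneg (le_max_left _ _)]
        exact max_le (abs_nonneg _) (le_abs_self _)
      have h2 : |lam n ω - η * ghat n ω| ≤ |lam n ω| + η * (1 - δ) := by
        calc |lam n ω - η * ghat n ω| ≤ |lam n ω| + |η * ghat n ω| := abs_sub _ _
        _ ≤ |lam n ω| + η * (1 - δ) := by
            rw [abs_mul, abs_of_pos hη]
            nlinarith
      have h3 : (0:ℝ) ≤ |lam n ω| + η * (1 - δ) := by positivity
      simp only [Real.norm_eq_abs, hu]
      rw [abs_of_nonneg h3]
      exact h1.trans h2
  have hlamInt : ∀ k : ℕ, Integrable (lam k) μ :=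
    fun k => (hlamL2 k).integrable one_le_two
  have hsqInt : ∀ k : ℕ, Integrable (fun ω => lam k ω ^ 2) μ :=
    fun k => (hlamL2 k).integrable_sq
  -- the key pointwise inequality from strict feasibility and ε-optimal primal updates
  have hpoint : ∀ k : ℕ, ∀ᵐ ω ∂μ,
      C * lam k ω - B ≤ lam k ω * g (th (k + 1) ω) := by
    intro k
    filter_upwards [hprimal k, hlamnn k] with ω hp hnn
    have h1 : V θtilde + lam k ω * g θtilde ≤ d (lam k ω) :=
      (hd _ hnn).1 ⟨θtilde, rfl⟩
    have h2 : lam k ω * C ≤ lam k ω * g θtilde :=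
      mul_le_mul_of_nonneg_left hstrict hnn
    have h2' : C * lam k ω = lam k ω * C := mul_comm _ _
    have h3 := hVle (th (k + 1) ω)
    simp only [hBdef]; linarith
  have hgcompInt : ∀ k : ℕ, Integrable (fun ω => lam k ω * g (th (k + 1) ω)) μ := by
    intro k
    have := (hlamInt k).bdd_mul
      (f := fun ω => g (th (k + 1) ω)) (c := 1 - δ)
      ((hg.comp (hthMeas k)).aestronglyMeasurable)
      (Filter.Eventually.of_forall fun ω => by simpa using hgb (th (k + 1) ω))
    exact this.congr (Filter.Eventually.of_forall fun ω => mul_comm _ _)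
  -- lower bound for ∫ λ_k g(θ_{k+1})
  have hcrossge : ∀ k : ℕ, -B ≤ ∫ ω, lam k ω * g (th (k + 1) ω) ∂μ := by
    intro k
    have h1 : ∫ ω, (C * lam k ω - B) ∂μ ≤ ∫ ω, lam k ω * g (th (k + 1) ω) ∂μ :=
      integral_mono_ae (((hlamInt k).const_mul C).sub (integrable_const B))
        (hgcompInt k) (hpoint k)
    have h2 : ∫ ω, (C * lam k ω - B) ∂μ = C * (∫ ω, lam k ω ∂μ) - B := by
      rw [integral_sub ((hlamInt k).const_mul C) (integrable_const B),
        integral_const_mul, integral_const]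
      simp
    have h3 : 0 ≤ ∫ ω, lam k ω ∂μ := integral_nonneg_of_ae (hlamnn k)
    have h4 := mul_nonneg hC.le h3
    linarith
  -- a one-step recursion on second moments
  set b : ℕ → ℝ := fun k => ∫ ω, lam k ω ^ 2 ∂μ with hbdef
  have hbnn : ∀ k, 0 ≤ b k := fun k => integral_nonneg fun ω => sq_nonneg _
  have hstep : ∀ k : ℕ, b (k + 1) ≤ b k + K' := by
    intro k
    by_cases hgint : Integrable (ghat k) μ
    · -- the cross term is integrable
      have hprod : Integrable (fun ω => lam k ω * ghat k ω) μ := by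
        have := (hlamInt k).bdd_mul (f := ghat k) (c := 1 - δ)
          hgint.1
          ((hghatb k).mono fun ω h => by simpa using h)
        exact this.congr (Filter.Eventually.of_forall fun ω => mul_comm _ _)
      have hprod' : Integrable (lam k * ghat k) μ := hprod
      -- the conditional-expectation computation
      have hpull : μ[lam k * ghat k | MeasurableSpace.comap (th (k + 1)) mΘ]
          =ᵐ[μ] lam k * μ[ghat k | MeasurableSpace.comap (th (k + 1)) mΘ] :=
        condExp_mul_of_stronglyMeasurable_left ((hadapted k).stronglyMeasurable) hprod' hgint
      haveI : IsFiniteMeasure (μ.trim (hG k)) := isFiniteMeasure_trim (hG k)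
      haveI : SigmaFinite (μ.trim (hG k)) := inferInstance
      have hcross : ∫ ω, lam k ω * ghat k ω ∂μ
          = ∫ ω, lam k ω * g (th (k + 1) ω) ∂μ := by
        have h1 : ∫ ω, (μ[lam k * ghat k | MeasurableSpace.comap (th (k + 1)) mΘ]) ω ∂μ
            = ∫ ω, (lam k * ghat k) ω ∂μ := integral_condExp (hG k)
        have h2 : ∫ ω, (μ[lam k * ghat k | MeasurableSpace.comap (th (k + 1)) mΘ]) ω ∂μ
            = ∫ ω, lam k ω * g (th (k + 1) ω) ∂μ := by
          refine integral_congr_ae ?_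
          filter_upwards [hpull, hunbiased k] with ω h1 h2
          simp only [Pi.mul_apply] at h1 ⊢
          rw [h1, h2]
        rw [← h2, h1]; rfl
      have hcb : -B ≤ ∫ ω, lam k ω * ghat k ω ∂μ := hcross ▸ hcrossge k
      -- the pointwise square inequality
      have hsq : ∀ᵐ ω ∂μ, lam (k + 1) ω ^ 2
          ≤ lam k ω ^ 2 - 2 * η * (lam k ω * ghat k ω) + η ^ 2 * (1 - δ) ^ 2 := by
        filter_upwards [hupdate k, hghatb k] with ω hu hb
        have h1 : max 0 (lam k ω - η * ghat k ω) ≤ |lam k ω - η * ghat k ω| :=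
          max_le (abs_nonneg _) (le_abs_self _)
        have h2 : (max 0 (lam k ω - η * ghat k ω)) ^ 2
            ≤ (lam k ω - η * ghat k ω) ^ 2 := by
          rw [← sq_abs (lam k ω - η * ghat k ω)]
          exact pow_le_pow_left₀ (le_max_left _ _) h1 2
        have h3 := abs_le.1 hb
        have h4 : ghat k ω ^ 2 ≤ (1 - δ) ^ 2 := sq_le_sq' h3.1 h3.2
        have h5 : η ^ 2 * ghat k ω ^ 2 ≤ η ^ 2 * (1 - δ) ^ 2 :=
          mul_le_mul_of_nonneg_left h4 (sq_nonneg η)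
        rw [hu]
        nlinarith [h2, h5]
      have hRint : Integrable (fun ω =>
          lam k ω ^ 2 - 2 * η * (lam k ω * ghat k ω) + η ^ 2 * (1 - δ) ^ 2) μ :=
        ((hsqInt k).sub (hprod.const_mul (2 * η))).add (integrable_const _)
      have h4 : b (k + 1) ≤ ∫ ω,
          (lam k ω ^ 2 - 2 * η * (lam k ω * ghat k ω) + η ^ 2 * (1 - δ) ^ 2) ∂μ :=
        integral_mono_ae (hsqInt (k + 1)) hRint hsq
      have h5 : ∫ ω,
          (lam k ω ^ 2 - 2 * η * (lam k ω * ghat k ω) + η ^ 2 * (1 - δ) ^ 2) ∂μ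
          = b k - 2 * η * (∫ ω, lam k ω * ghat k ω ∂μ) + η ^ 2 * (1 - δ) ^ 2 := by
        have iB : Integrable (fun ω => 2 * η * (lam k ω * ghat k ω)) μ :=
          hprod.const_mul (2 * η)
        have iA : Integrable
            (fun ω => lam k ω ^ 2 - 2 * η * (lam k ω * ghat k ω)) μ :=
          (hsqInt k).sub iB
        rw [integral_add iA (integrable_const _), integral_sub (hsqInt k) iB,
          integral_const_mul, integral_const]
        simp
        rfl
      have hKle : K ≤ K' := le_max_left _ _
      have : b (k + 1) ≤ b k + K := by
        rw [h5] at h4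
        have h6 : 2 * η * (-B) ≤ 2 * η * (∫ ω, lam k ω * ghat k ω ∂μ) :=
          mul_le_mul_of_nonneg_left hcb (by positivity)
        simp only [hKdef]
        linarith
      linarith
    · -- degenerate case: `ghat k` is not integrable, hence `g ∘ θ_{k+1} = 0` a.e.
      have hcz : μ[ghat k | MeasurableSpace.comap (th (k + 1)) mΘ] = 0 :=
        condExp_of_not_integrable hgint
      have hz : (fun ω => g (th (k + 1) ω)) =ᵐ[μ] (0 : Ω → ℝ) := by
        have := (hunbiased k).symm
        rw [hcz] at this
        exact this
      have hbd : ∀ᵐ ω ∂μ, lam k ω ≤ B / C := by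
        filter_upwards [hpoint k, hz] with ω h1 h2
        have : g (th (k + 1) ω) = 0 := h2
        rw [this, mul_zero] at h1
        rw [le_div_iff₀ hC]
        linarith
      have hsq : ∀ᵐ ω ∂μ, lam (k + 1) ω ^ 2 ≤ (B / C + η * (1 - δ)) ^ 2 := by
        filter_upwards [hupdate k, hghatb k, hbd, hlamnn k] with ω hu hb hB hnn
        have h3 := abs_le.1 hb
        have h1 : 0 ≤ lam (k + 1) ω := by rw [hu]; exact le_max_left _ _
        have h2 : lam (k + 1) ω ≤ B / C + η * (1 - δ) := by
          rw [hu]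
          refine max_le (by positivity) ?_
          have h6 := mul_le_mul_of_nonneg_left h3.1 hη.le
          linarith
        exact pow_le_pow_left₀ h1 h2 2
      have h4 : b (k + 1) ≤ ∫ _ω, (B / C + η * (1 - δ)) ^ 2 ∂μ :=
        integral_mono_ae (hsqInt (k + 1)) (integrable_const _) hsq
      have h5 : ∫ _ω, (B / C + η * (1 - δ)) ^ 2 ∂μ = (B / C + η * (1 - δ)) ^ 2 := by
        rw [integral_const]; simp
      have h6 : (B / C + η * (1 - δ)) ^ 2 ≤ K' := le_max_right _ _
      have := hbnn k
      linarith
  -- hence second moments grow at most linearly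
  have hbk : ∀ k : ℕ, b k ≤ b 0 + K' * k := by
    intro k
    induction k with
    | zero => simp
    | succ n ih =>
      have := hstep n
      push_cast
      linarith
  -- first moments are dominated by the square root of second moments
  set a : ℕ → ℝ := fun k => ∫ ω, lam k ω ∂μ with hadef
  have hann : ∀ k, 0 ≤ a k := fun k => integral_nonneg_of_ae (hlamnn k)
  have ha2 : ∀ k, a k ^ 2 ≤ b k := by
    intro k
    have hv := ProbabilityTheory.variance_nonneg (lam k) μ
    rw [ProbabilityTheory.variance_eq_sub (hlamL2 k)] at hv
    have he : (∫ ω, (lam k ^ 2) ω ∂μ) = b k := by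
      refine integral_congr_ae (Filter.Eventually.of_forall fun ω => ?_)
      simp [Pi.pow_apply]
    simp only [hadef, hbdef] at *
    rw [he] at hv
    linarith
  have hale : ∀ k, a k ≤ Real.sqrt (b 0 + K' * k) := by
    intro k
    have h0 : 0 ≤ b 0 + K' * k := le_trans (hbnn k) (hbk k)
    rw [Real.le_sqrt (hann k) h0]
    exact le_trans (ha2 k) (hbk k)
  -- conclude by a squeeze argument
  have htend : Filter.Tendsto (fun k : ℕ => a k / (k : ℝ)) Filter.atTop (nhds 0) := by
    have hg0 : Filter.Tendsto (fun k : ℕ => Real.sqrt ((b 0 + K' * k) / (k : ℝ) ^ 2))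
        Filter.atTop (nhds 0) := by
      have h1 : Filter.Tendsto (fun k : ℕ => (b 0 + K' * k) / (k : ℝ) ^ 2)
          Filter.atTop (nhds 0) := by
        have hsq : Filter.Tendsto (fun k : ℕ => ((k : ℝ)) ^ 2) Filter.atTop Filter.atTop :=
          (Filter.tendsto_pow_atTop (two_ne_zero)).comp tendsto_natCast_atTop_atTop
        have hb0 : Filter.Tendsto (fun k : ℕ => b 0 / (k : ℝ) ^ 2) Filter.atTop (nhds 0) :=
          Filter.Tendsto.div_atTop tendsto_const_nhds hsq
        have hk' : Filter.Tendsto (fun k : ℕ => K' / (k : ℝ)) Filter.atTop (nhds 0) :=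
          tendsto_const_div_atTop_nhds_zero_nat K'
        have : (fun k : ℕ => (b 0 + K' * k) / (k : ℝ) ^ 2)
            =ᶠ[Filter.atTop] fun k : ℕ => b 0 / (k : ℝ) ^ 2 + K' / (k : ℝ) := by
          filter_upwards [Filter.eventually_ge_atTop 1] with k hk
          have hkpos : (0:ℝ) < (k : ℝ) := by exact_mod_cast hk
          field_simp
        rw [Filter.tendsto_congr' this]
        simpa using hb0.add hk'
      have := (Real.continuous_sqrt.tendsto 0).comp h1
      rw [Real.sqrt_zero] at this
      exact this
    refine squeeze_zero' (Filter.Eventually.of_forall fun k =>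
      div_nonneg (hann k) (Nat.cast_nonneg k)) ?_ hg0
    filter_upwards [Filter.eventually_ge_atTop 1] with k hk
    have hkpos : (0:ℝ) < (k : ℝ) := by exact_mod_cast hk
    have h0 : 0 ≤ b 0 + K' * k := le_trans (hbnn k) (hbk k)
    have hs : Real.sqrt ((b 0 + K' * k) / (k : ℝ) ^ 2)
        = Real.sqrt (b 0 + K' * k) / (k : ℝ) := by
      rw [Real.sqrt_div h0, Real.sqrt_sq hkpos.le]
    rw [hs]
    exact div_le_div_of_nonneg_right (hale k) hkpos.le |>.trans_eq rfl
  exact htend.limsup_eq
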